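/- Let U be a Δ-regular Lucas sequence and l ≥ 1. If p is a prime not dividing Q whose rank of appearance ρ_U(p) (least n ≥ 1 with p | U_n) satisfies ρ_U(p) > l, then v_p(C_{U,l}(n)) ≥ 0 for all n ≥ 1, where C_{U,l}(n) = (1/U_{n+1}^l) · ((l+1)n)!_U / (n!_U)^{l+1}. -/

import Mathlib

/-- The Lucas sequence `U(P,Q)`: `U_0 = 0`, `U_1 = 1`, `U_{n+2} = P·U_{n+1} − Q·U_n`. -/
def lucasU (P Q : ℤ) : ℕ → ℤ
  | 0 => 0
  | 1 => 1
  | n + 2 => P * lucasU P Q (n + 1) - Q * lucasU P Q n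

/-- The generalized factorial `n!_U = U_n U_{n−1} ⋯ U_1`. -/
def lucasFact (P Q : ℤ) (n : ℕ) : ℤ := ∏ i ∈ Finset.range n, lucasU P Q (i + 1)

lemma lucas_zero (P Q : ℤ) : lucasU P Q 0 = 0 := rfl
lemma lucas_one (P Q : ℤ) : lucasU P Q 1 = 1 := rfl
lemma lucas_rec (P Q : ℤ) (n : ℕ) :
    lucasU P Q (n + 2) = P * lucasU P Q (n + 1) - Q * lucasU P Q n := rfl

lemma lucas_add (P Q : ℤ) (m n : ℕ) :
    lucasU P Q (m + 1 + n) = lucasU P Q (m + 1) * lucasU P Q (n + 1)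
      - Q * (lucasU P Q m * lucasU P Q n) := by
  induction n using Nat.twoStepInduction with
  | zero => simp [lucas_zero, lucas_one]
  | one =>
      have : m + 1 + 1 = m + 2 := by omega
      rw [this, lucas_rec]
      simp [lucas_zero, lucas_one, lucas_rec]
      ring_nf
  | more n ih1 ih2 =>
      have e : m + 1 + (n + 2) = (m + 1 + n) + 2 := by omega
      have e2 : m + 1 + (n + 1) = (m + 1 + n) + 1 := by omega
      have e3 : n + 1 + 1 = n + 2 := rfl
      rw [e3] at ih2
      rw [e, lucas_rec, ← e2, ih1, ih2, show n+2+1 = (n+1)+2 from rfl,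
        lucas_rec (n := n+1), lucas_rec (n := n)]
      ring

lemma lucas_det (P Q : ℤ) : ∀ b a : ℕ, b ≤ a →
    lucasU P Q a * lucasU P Q (b + 1) - lucasU P Q (a + 1) * lucasU P Q b
      = Q ^ b * lucasU P Q (a - b) := by
  intro b
  induction b with
  | zero => intro a _; simp [lucas_zero, lucas_one]
  | succ b ih =>
      intro a hba
      obtain ⟨c, rfl⟩ : ∃ c, a = c + 1 := ⟨a - 1, by omega⟩
      have h1 := ih c (by omega)
      have e : c + 1 - (b + 1) = c - b := by omega
      rw [e, lucas_rec (n := b), lucas_rec (n := c), pow_succ]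
      linear_combination Q * h1

lemma lucas_step (P Q : ℤ) (n s : ℕ) :
    lucasU P Q (n + 2 * (s + 1)) = (lucasU P Q (s + 2) - Q * lucasU P Q s) * lucasU P Q (n + (s + 1))
      - Q ^ (s + 1) * lucasU P Q n := by
  have e : n + 2 * (s + 1) = (n + s) + 1 + (s + 1) := by omega
  have h1 := lucas_add P Q (n + s) (s + 1)
  have h2 := lucas_det P Q s (n + s) (by omega)
  have e2 : n + s - s = n := by omega
  rw [e2] at h2
  have e3 : n + (s + 1) = n + s + 1 := by omega
  rw [e, h1, e3, pow_succ]
  linear_combination -Q * h2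

lemma lucas_dvd (P Q : ℤ) (m k : ℕ) : lucasU P Q m ∣ lucasU P Q (m * k) := by
  induction k with
  | zero => simp [lucas_zero]
  | succ k ih =>
      rcases Nat.eq_zero_or_pos m with rfl | hm
      · simpa using ih
      rcases Nat.eq_zero_or_pos k with rfl | hk
      · simp
      have hmk : 1 ≤ m * k := Nat.one_le_iff_ne_zero.mpr (by positivity)
      have emul : m * (k + 1) = m * k + m := by ring
      have e : m * (k + 1) = (m * k - 1) + 1 + m := by omega
      have h := lucas_add P Q (m * k - 1) m
      have e2 : m * k - 1 + 1 = m * k := by omega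
      rw [e2] at h
      rw [e, e2, h]
      obtain ⟨c, hc⟩ : ∃ c, m = (m - 1) + 1 := ⟨m-1, by omega⟩
      exact dvd_sub (Dvd.dvd.mul_right ih _) (Dvd.dvd.mul_left (dvd_refl _) _ |>.mul_left Q)

lemma lucas_copQ {P Q : ℤ} (hcop : IsCoprime P Q) : ∀ n : ℕ, IsCoprime Q (lucasU P Q (n + 1)) := by
  intro n
  induction n using Nat.twoStepInduction with
  | zero => simpa [lucas_one] using isCoprime_one_right
  | one =>
      have : lucasU P Q 2 = P * 1 - Q * 0 := rfl
      rw [this]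
      have h : IsCoprime Q (P * 1) := by simpa using hcop.symm
      simpa using (h.add_mul_left_right (-0 : ℤ)).mul_add_left_right 0 |>.symm.symm
  | more n ih ih2 =>
      rw [lucas_rec]
      have h1 : IsCoprime Q (P * lucasU P Q (n + 1 + 1)) := hcop.symm.mul_right ih2
      have := h1.add_mul_left_right (- lucasU P Q (n + 1))
      have e : P * lucasU P Q (n + 1 + 1) + Q * - lucasU P Q (n + 1)
          = P * lucasU P Q (n + 2) - Q * lucasU P Q (n + 1) := by ring
      rwa [e] at this

lemma lucas_consec {P Q : ℤ} (hcop : IsCoprime P Q) :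
    ∀ n : ℕ, IsCoprime (lucasU P Q n) (lucasU P Q (n + 1)) := by
  intro n
  induction n with
  | zero => simpa [lucas_zero, lucas_one] using (isCoprime_one_right (x := (0:ℤ)))
  | succ n ih =>
      rw [lucas_rec]
      have h1 : IsCoprime (lucasU P Q (n + 1)) (Q * lucasU P Q n) :=
        ((lucas_copQ hcop n).symm).mul_right ih.symm
      have := (h1.neg_right).add_mul_left_right P
      have e : -(Q * lucasU P Q n) + lucasU P Q (n + 1) * P
          = P * lucasU P Q (n + 1) - Q * lucasU P Q n := by ring
      rwa [e] at this

lemma lucas_rank {P Q : ℤ} (hcop : IsCoprime P Q) {p : ℕ} (hp : p.Prime)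
    {ρ : ℕ} (hρpos : 0 < ρ) (hρdvd : (p : ℤ) ∣ lucasU P Q ρ)
    (hρmin : ∀ m : ℕ, 0 < m → (p : ℤ) ∣ lucasU P Q m → ρ ≤ m) :
    ∀ m : ℕ, 1 ≤ m → ((p : ℤ) ∣ lucasU P Q m ↔ ρ ∣ m) := by
  have hpnotnext : ¬ (p : ℤ) ∣ lucasU P Q (ρ + 1) := by
    intro hdvd
    have := (lucas_consec hcop ρ).isUnit_of_dvd' hρdvd hdvd
    exact (Int.prime_iff_natAbs_prime.mpr (by simpa using hp)).not_unit this
  intro m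
  induction m using Nat.strong_induction_on with
  | _ m ih =>
    intro hm
    constructor
    · intro hdvd
      have hρm : ρ ≤ m := hρmin m hm hdvd
      rcases eq_or_lt_of_le hρm with rfl | hlt
      · exact dvd_refl _
      · set m' := m - ρ with hm'
        have hm'pos : 1 ≤ m' := by omega
        have h := lucas_add P Q (m' - 1) ρ
        have e2 : m' - 1 + 1 = m' := by omega
        rw [e2] at h
        have e3 : m' + ρ = m := by omega
        rw [e3] at h
        have hdvd' : (p : ℤ) ∣ lucasU P Q m' * lucasU P Q (ρ + 1) := by
          have : lucasU P Q m' * lucasU P Q (ρ + 1)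
              = lucasU P Q m + Q * (lucasU P Q (m' - 1) * lucasU P Q ρ) := by
            rw [h]; ring
          rw [this]
          exact dvd_add hdvd (Dvd.dvd.mul_left (hρdvd.mul_left _) Q)
        have hpprime : Prime (p : ℤ) := Nat.prime_iff_prime_int.mp hp
        have : (p : ℤ) ∣ lucasU P Q m' := by
          rcases hpprime.dvd_mul.mp hdvd' with h' | h'
          · exact h'
          · exact absurd h' hpnotnext
        have hdm' := (ih m' (by omega) hm'pos).mp this
        obtain ⟨c, hc⟩ := hdm'
        exact ⟨c + 1, by rw [Nat.mul_succ, ← hc]; omega⟩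
    · rintro ⟨k, rfl⟩
      exact hρdvd.trans (lucas_dvd P Q ρ k)

lemma lucas_double (P Q : ℤ) (s : ℕ) :
    lucasU P Q (2 * (s + 1)) = lucasU P Q (s + 1) * (lucasU P Q (s + 2) - Q * lucasU P Q s) := by
  have h := lucas_add P Q s (s + 1)
  have e : s + 1 + (s + 1) = 2 * (s + 1) := by omega
  rw [e] at h
  rw [h]
  ring

lemma lucas_Vsq (P Q : ℤ) (s : ℕ) :
    (lucasU P Q (s + 2) - Q * lucasU P Q s) ^ 2
      = (P ^ 2 - 4 * Q) * lucasU P Q (s + 1) ^ 2 + 4 * Q ^ (s + 1) := by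
  have h1 : lucasU P Q (s + 2) = P * lucasU P Q (s + 1) - Q * lucasU P Q s := lucas_rec P Q s
  have h2 := lucas_det P Q s (s + 1) (by omega)
  simp only [Nat.add_sub_cancel_left, lucas_one] at h2
  rw [pow_succ]
  linear_combination (lucasU P Q (s+2) + Q * lucasU P Q s + P * lucasU P Q (s+1)) * h1 + 4 * Q * h2

lemma lucas_Vdouble (P Q : ℤ) (s : ℕ) :
    lucasU P Q (2 * (s + 1) + 1) - Q * lucasU P Q (2 * s + 1)
      = (lucasU P Q (s + 2) - Q * lucasU P Q s) ^ 2 - 2 * Q ^ (s + 1) := by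
  have h1 := lucas_add P Q (s + 1) (s + 1)
  have e1 : s + 1 + 1 + (s + 1) = 2 * (s + 1) + 1 := by omega
  rw [e1] at h1
  have h2 := lucas_add P Q s s
  have e2 : s + 1 + s = 2 * s + 1 := by omega
  rw [e2] at h2
  have h3 := lucas_det P Q s (s + 1) (by omega)
  simp only [Nat.add_sub_cancel_left, lucas_one] at h3
  rw [h1, h2, pow_succ]
  have e3 : s + 1 + 1 = s + 2 := rfl
  rw [e3]
  linear_combination -2 * Q * h3

lemma lucas_factor (P Q : ℤ) (s : ℕ) : ∀ k : ℕ,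
    lucasU P Q ((s + 1) * k) = lucasU P Q (s + 1)
      * lucasU (lucasU P Q (s + 2) - Q * lucasU P Q s) (Q ^ (s + 1)) k := by
  intro k
  induction k using Nat.twoStepInduction with
  | zero => simp [lucas_zero]
  | one => simp [lucas_one]
  | more k ih1 ih2 =>
      have e : (s + 1) * (k + 2) = (s + 1) * k + 2 * (s + 1) := by ring
      have h := lucas_step P Q ((s + 1) * k) s
      have e2 : (s + 1) * k + (s + 1) = (s + 1) * (k + 1) := by ring
      rw [e2] at h
      rw [e, h, ih1, ih2, lucas_rec _ (Q ^ (s + 1)) k]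
      ring

lemma lucas_cong (A B : ℤ) : ∀ k : ℕ, ∃ c : ℤ,
    2 ^ k * lucasU A B (k + 1) = ((k : ℤ) + 1) * A ^ k + (A ^ 2 - 4 * B) * c := by
  intro k
  induction k using Nat.twoStepInduction with
  | zero => exact ⟨0, by simp [lucas_one]⟩
  | one =>
      refine ⟨0, ?_⟩
      have : lucasU A B 2 = A * 1 - B * 0 := rfl
      rw [this]
      push_cast
      ring
  | more k ih1 ih2 =>
      obtain ⟨c1, h1⟩ := ih1
      obtain ⟨c2, h2⟩ := ih2
      refine ⟨2 * A * c2 - A ^ 2 * c1 + (A ^ 2 - 4 * B) * c1 + ((k : ℤ) + 1) * A ^ k, ?_⟩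
      rw [lucas_rec]
      push_cast
      have e : k + 1 + 1 = k + 2 := rfl
      rw [e] at h2
      push_cast at h1 h2 ⊢
      linear_combination (2 * A) * h2 - 4 * B * h1

section Val

lemma int_pow_dvd_iff {p c : ℕ} (hp : p.Prime) {x : ℤ} (hx : x ≠ 0) :
    (p : ℤ) ^ c ∣ x ↔ c ≤ x.natAbs.factorization p := by
  rw [show ((p:ℤ)^c) = ((p^c : ℕ) : ℤ) by push_cast; ring, Int.natCast_dvd]
  exact hp.pow_dvd_iff_le_factorization (Int.natAbs_ne_zero.mpr hx)

lemma int_val_mul {p : ℕ} {x y : ℤ} (hx : x ≠ 0) (hy : y ≠ 0) :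
    ((x * y).natAbs).factorization p = x.natAbs.factorization p + y.natAbs.factorization p := by
  rw [Int.natAbs_mul, Nat.factorization_mul (Int.natAbs_ne_zero.mpr hx) (Int.natAbs_ne_zero.mpr hy)]
  rfl

lemma int_val_dvd {p : ℕ} (hp : p.Prime) {x : ℤ} (hx : x ≠ 0) :
    (p : ℤ) ^ (x.natAbs.factorization p) ∣ x :=
  (int_pow_dvd_iff hp hx).mpr (le_refl _)

lemma int_val_not_dvd {p : ℕ} (hp : p.Prime) {x : ℤ} (hx : x ≠ 0) :
    ¬ (p : ℤ) ^ (x.natAbs.factorization p + 1) ∣ x := by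
  rw [int_pow_dvd_iff hp hx]; omega

lemma int_val_eq {p : ℕ} (hp : p.Prime) {x : ℤ} (hx : x ≠ 0) {c : ℕ}
    (h1 : (p : ℤ) ^ c ∣ x) (h2 : ¬ (p : ℤ) ^ (c + 1) ∣ x) :
    x.natAbs.factorization p = c := by
  rw [int_pow_dvd_iff hp hx] at h1 h2
  omega

lemma int_val_zero {p : ℕ} {x : ℤ} (h : ¬ (p : ℤ) ∣ x) : x.natAbs.factorization p = 0 := by
  apply Nat.factorization_eq_zero_of_not_dvd
  intro hd
  exact h (Int.natCast_dvd.mpr hd)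

end Val

section OddP

lemma lucas_val_odd {P Q : ℤ} {p : ℕ} (hp : p.Prime) (hodd : p ≠ 2) (hpQ : ¬ (p:ℤ) ∣ Q)
    (hreg : ∀ n : ℕ, 1 ≤ n → lucasU P Q n ≠ 0) {m : ℕ} (hm : 1 ≤ m)
    (hdvd : (p:ℤ) ∣ lucasU P Q m) :
    (∀ k : ℕ, 1 ≤ k → ¬ p ∣ k →
      (lucasU P Q (m * k)).natAbs.factorization p = (lucasU P Q m).natAbs.factorization p)
    ∧ (lucasU P Q (m * p)).natAbs.factorization p
        = (lucasU P Q m).natAbs.factorization p + 1 := by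
  obtain ⟨s, rfl⟩ : ∃ s, m = s + 1 := ⟨m - 1, by omega⟩
  set A : ℤ := lucasU P Q (s + 2) - Q * lucasU P Q s with hA
  set B : ℤ := Q ^ (s + 1) with hB
  have hpint : Prime (p : ℤ) := Nat.prime_iff_prime_int.mp hp
  have hfac : ∀ k : ℕ, lucasU P Q ((s+1) * k) = lucasU P Q (s+1) * lucasU A B k :=
    lucas_factor P Q s
  have hUm : lucasU P Q (s+1) ≠ 0 := hreg _ (by omega)
  have hWne : ∀ k : ℕ, 1 ≤ k → lucasU A B k ≠ 0 := by
    intro k hk hzero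
    have := hfac k
    rw [hzero, mul_zero] at this
    exact hreg ((s+1)*k) (Nat.mul_pos (Nat.succ_pos s) hk) this
  have hΔ' : A ^ 2 - 4 * B = (P ^ 2 - 4 * Q) * lucasU P Q (s+1) ^ 2 := by
    have := lucas_Vsq P Q s
    rw [← hA, ← hB] at this
    linarith [this]
  have hppΔ' : (p:ℤ)^2 ∣ A ^ 2 - 4 * B := by
    rw [hΔ']
    exact Dvd.dvd.mul_left (pow_dvd_pow_of_dvd hdvd 2) _
  have hpΔ' : (p:ℤ) ∣ A ^ 2 - 4 * B := dvd_trans (dvd_pow_self _ (by norm_num)) hppΔ'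
  have hppos : 1 ≤ p := hp.pos
  have hp2 : ¬ (p:ℤ) ∣ 2 := by
    intro h
    have h2 : p ∣ 2 := Int.natCast_dvd_natCast.mp (by exact_mod_cast h)
    exact hodd ((Nat.prime_dvd_prime_iff_eq hp Nat.prime_two).mp h2)
  have hpA : ¬ (p:ℤ) ∣ A := by
    intro h
    have h4B : (p:ℤ) ∣ 4 * B := by
      have : (4:ℤ) * B = A ^ 2 - (A ^ 2 - 4 * B) := by ring
      rw [this]
      exact dvd_sub (h.trans (dvd_pow_self A (by norm_num))) hpΔ'
    rcases hpint.dvd_mul.mp h4B with h' | h'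
    · exact hp2 (hpint.dvd_of_dvd_pow (n := 2) (by norm_num [show (4:ℤ) = 2^2 by norm_num] at h' ⊢; exact_mod_cast h'))
    · exact hpQ (hpint.dvd_of_dvd_pow (h'.trans (dvd_refl _)))
  have key : ∀ j : ℕ, ∃ c : ℤ, 2 ^ j * lucasU A B (j + 1) = ((j : ℤ) + 1) * A ^ j + (A ^ 2 - 4 * B) * c :=
    lucas_cong A B
  constructor
  · intro k hk hpk
    obtain ⟨j, rfl⟩ : ∃ j, k = j + 1 := ⟨k - 1, by omega⟩
    obtain ⟨c, hc⟩ := key j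
    have hpW : ¬ (p:ℤ) ∣ lucasU A B (j + 1) := by
      intro h
      have h1 : (p:ℤ) ∣ ((j : ℤ) + 1) * A ^ j := by
        have : ((j:ℤ) + 1) * A ^ j = 2 ^ j * lucasU A B (j+1) - (A ^ 2 - 4 * B) * c := by
          linarith [hc]
        rw [this]
        exact dvd_sub (h.mul_left _) (hpΔ'.mul_right _)
      rcases hpint.dvd_mul.mp h1 with h' | h'
      · have : (p:ℤ) ∣ ((j + 1 : ℕ) : ℤ) := by push_cast; exact h'
        exact hpk (Int.natCast_dvd_natCast.mp this)
      · exact hpA (hpint.dvd_of_dvd_pow h')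
    rw [hfac (j+1), int_val_mul hUm (hWne _ (by omega)), int_val_zero hpW, Nat.add_zero]
  · obtain ⟨j, hj⟩ : ∃ j, p = j + 1 := ⟨p - 1, by omega⟩
    obtain ⟨c, hc⟩ := key j
    have hpj : (p : ℤ) = (j : ℤ) + 1 := by exact_mod_cast congrArg (Nat.cast : ℕ → ℤ) hj
    have hWp : (p:ℤ) ∣ lucasU A B p := by
      have h1 : (p:ℤ) ∣ 2 ^ j * lucasU A B p := by
        rw [show lucasU A B p = lucasU A B (j+1) by rw [hj], hc, ← hpj]
        exact dvd_add (Dvd.dvd.mul_right (dvd_refl _) _) (hpΔ'.mul_right _)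
      rcases hpint.dvd_mul.mp h1 with h' | h'
      · exact absurd (hpint.dvd_of_dvd_pow h') hp2
      · exact h'
    have hWp2 : ¬ (p:ℤ)^2 ∣ lucasU A B p := by
      intro h
      have h1 : (p:ℤ)^2 ∣ ((p:ℤ)) * A ^ j := by
        have e : (p:ℤ) * A ^ j = 2 ^ j * lucasU A B (j+1) - (A ^ 2 - 4 * B) * c := by
          rw [hpj]; linarith [hc]
        rw [e, ← hj]
        exact dvd_sub (h.mul_left _) (hppΔ'.mul_right _)
      have : (p:ℤ) ∣ A ^ j := by
        have hpne : (p:ℤ) ≠ 0 := by exact_mod_cast hp.ne_zero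
        rw [sq] at h1
        exact (mul_dvd_mul_iff_left hpne).mp h1
      exact hpA (hpint.dvd_of_dvd_pow this)
    have hvW : (lucasU A B p).natAbs.factorization p = 1 := by
      apply int_val_eq hp (hWne p (by omega)) (by simpa using hWp)
      simpa using hWp2
    rw [hfac p, int_val_mul hUm (hWne p (by omega)), hvW]

end OddP

section TwoP

lemma lucas_evenV {P Q : ℤ} (s : ℕ) (h : (2:ℤ) ∣ lucasU P Q (s+1)) :
    (2:ℤ) ∣ (lucasU P Q (s+2) - Q * lucasU P Q s) := by
  have hsq := lucas_Vsq P Q s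
  have h2 : (2:ℤ) ∣ (lucasU P Q (s+2) - Q * lucasU P Q s)^2 := by
    rw [hsq]
    exact dvd_add (Dvd.dvd.mul_left (dvd_trans h (dvd_pow_self _ (by norm_num))) _)
      (Dvd.dvd.mul_right (by norm_num) _)
  exact Int.prime_two.dvd_of_dvd_pow h2

lemma lucas_val_two_even {P Q : ℤ} (hreg : ∀ n : ℕ, 1 ≤ n → lucasU P Q n ≠ 0)
    {m : ℕ} (hm : 1 ≤ m) (hdvd : (2:ℤ) ∣ lucasU P Q m) :
    ∀ t : ℕ, m ∣ t → 1 ≤ t →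
      (2:ℤ) ^ ((lucasU P Q m).natAbs.factorization 2 + 1) ∣ lucasU P Q (2 * t) := by
  intro t hmt ht
  obtain ⟨s, rfl⟩ : ∃ s, t = s + 1 := ⟨t - 1, by omega⟩
  rw [lucas_double]
  have hUt : (2:ℤ) ∣ lucasU P Q (s+1) := by
    obtain ⟨c, hc⟩ := hmt
    rw [hc]
    exact hdvd.trans (lucas_dvd P Q m c)
  have h1 : (2:ℤ) ^ ((lucasU P Q m).natAbs.factorization 2) ∣ lucasU P Q (s+1) := by
    refine dvd_trans (int_val_dvd Nat.prime_two (hreg m hm)) ?_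
    obtain ⟨c, hc⟩ := hmt
    rw [hc]
    exact lucas_dvd P Q m c
  rw [pow_succ]
  exact mul_dvd_mul h1 (lucas_evenV s hUt)

lemma lucas_val_two_odd {P Q : ℤ} (hQ2 : ¬ (2:ℤ) ∣ Q)
    (hreg : ∀ n : ℕ, 1 ≤ n → lucasU P Q n ≠ 0)
    {m : ℕ} (hm : 1 ≤ m) (hdvd : (2:ℤ) ∣ lucasU P Q m) (hQne : Q ≠ 0) :
    ∀ j : ℕ, (lucasU P Q (m * (2 * j + 1))).natAbs.factorization 2
      = (lucasU P Q m).natAbs.factorization 2 := by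
  obtain ⟨s, rfl⟩ : ∃ s, m = s + 1 := ⟨m - 1, by omega⟩
  set m := s + 1
  set α := (lucasU P Q m).natAbs.factorization 2 with hα
  intro j
  induction j with
  | zero => simp [hα]
  | succ j ih =>
      have hstep := lucas_step P Q (m * (2 * j + 1)) s
      have e1 : m * (2 * j + 1) + 2 * (s + 1) = m * (2 * (j+1) + 1) := by
        show m * (2 * j + 1) + 2 * m = _
        ring
      have e2 : m * (2 * j + 1) + (s + 1) = m * (2 * j + 2) := by
        show m * (2 * j + 1) + m = _
        ring
      rw [e1, e2] at hstep
      set X := (lucasU P Q (s+2) - Q * lucasU P Q s) * lucasU P Q (m * (2 * j + 2)) with hX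
      set Y := Q ^ (s+1) * lucasU P Q (m * (2 * j + 1)) with hY
      have hradvd : (2:ℤ)^(α+1) ∣ X := by
        have h2t : 2 * (m * (j + 1)) = m * (2 * j + 2) := by ring
        have := lucas_val_two_even hreg hm hdvd (m * (j+1)) ⟨j+1, rfl⟩ (Nat.mul_pos (Nat.succ_pos s) (Nat.succ_pos j))
        rw [h2t] at this
        exact (this.mul_left _)
      have hQm : ¬ (2:ℤ) ∣ Q ^ (s+1) := fun h => hQ2 (Int.prime_two.dvd_of_dvd_pow h)
      have hYne : Y ≠ 0 := mul_ne_zero (pow_ne_zero _ hQne)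
        (hreg _ (Nat.mul_pos (Nat.succ_pos s) (by omega)))
      have hvY : Y.natAbs.factorization 2 = α := by
        rw [hY, int_val_mul (pow_ne_zero _ hQne)
          (hreg _ (Nat.mul_pos (Nat.succ_pos s) (by omega))), int_val_zero hQm, ih]
        omega
      have hne : lucasU P Q (m * (2 * (j+1) + 1)) ≠ 0 :=
        hreg _ (Nat.mul_pos (Nat.succ_pos s) (by omega))
      apply int_val_eq Nat.prime_two hne
      · rw [hstep]
        refine dvd_sub (dvd_trans (pow_dvd_pow 2 (by omega)) hradvd) ?_
        rw [← hvY]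
        exact int_val_dvd Nat.prime_two hYne
      · rw [hstep]
        intro hcon
        have : (2:ℤ)^(α+1) ∣ Y := by
          have e : Y = X - (X - Y) := by ring
          rw [e]
          exact dvd_sub hradvd hcon
        rw [← hvY] at this
        exact int_val_not_dvd Nat.prime_two hYne this

lemma lucas_val_two_step {P Q : ℤ} (hQ2 : ¬ (2:ℤ) ∣ Q)
    (hreg : ∀ n : ℕ, 1 ≤ n → lucasU P Q n ≠ 0)
    {m' : ℕ} (hm' : 1 ≤ m') (hdvd' : (2:ℤ) ∣ lucasU P Q m') :
    (lucasU P Q (2 * (2 * m'))).natAbs.factorization 2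
      = (lucasU P Q (2 * m')).natAbs.factorization 2 + 1 := by
  obtain ⟨s, rfl⟩ : ∃ s, m' = s + 1 := ⟨m' - 1, by omega⟩
  set m' := s + 1
  have hdoub := lucas_double P Q (2 * m' - 1)
  have e : 2 * m' - 1 + 1 = 2 * m' := by omega
  have e2 : 2 * m' - 1 + 2 = 2 * m' + 1 := by omega
  rw [e, e2] at hdoub
  have hVd := lucas_Vdouble P Q s
  have e3 : 2 * s + 1 = 2 * m' - 1 := by omega
  rw [e3] at hVd
  set V := lucasU P Q (2 * m' + 1) - Q * lucasU P Q (2 * m' - 1) with hV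
  have hUne : lucasU P Q (2 * m') ≠ 0 := hreg _ (by omega)
  have hU2ne : lucasU P Q (2 * (2 * m')) ≠ 0 := hreg _ (by omega)
  have hVne : V ≠ 0 := by
    intro h
    rw [hdoub, h, mul_zero] at hU2ne
    exact hU2ne rfl
  have hVsmall : (2:ℤ) ∣ (lucasU P Q (s+2) - Q * lucasU P Q s) := lucas_evenV s hdvd'
  have hvV : V.natAbs.factorization 2 = 1 := by
    apply int_val_eq Nat.prime_two hVne
    · rw [pow_one, hVd]
      refine dvd_sub (dvd_trans hVsmall (dvd_pow_self _ (by norm_num))) ?_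
      exact Dvd.dvd.mul_right (by norm_num) _
    · intro hcon
      rw [hVd] at hcon
      obtain ⟨a, ha⟩ := hVsmall
      have h4 : (2:ℤ)^(1+1) ∣ (lucasU P Q (s+2) - Q * lucasU P Q s)^2 :=
        ⟨a^2, by rw [ha]; ring⟩
      have h2Q : (2:ℤ)^(1+1) ∣ 2 * Q^(s+1) := by
        have e : 2 * Q^(s+1) = (lucasU P Q (s+2) - Q * lucasU P Q s)^2
            - ((lucasU P Q (s+2) - Q * lucasU P Q s)^2 - 2 * Q^(s+1)) := by ring
        rw [e]
        exact dvd_sub h4 (by exact_mod_cast hcon)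
      obtain ⟨c, hc⟩ := h2Q
      have : Q ^ (s+1) = 2 * c := by
        have : (2:ℤ) * Q^(s+1) = 2 * (2 * c) := by rw [hc]; ring
        exact mul_left_cancel₀ (by norm_num) this
      exact hQ2 (Int.prime_two.dvd_of_dvd_pow ⟨c, this⟩)
  rw [hdoub, int_val_mul hUne hVne, hvV]

end TwoP

section Law

lemma lucas_val_law {P Q : ℤ} {p : ℕ} (hp : p.Prime) (hpQ : ¬ (p:ℤ) ∣ Q) (hQ : Q ≠ 0)
    (hreg : ∀ n : ℕ, 1 ≤ n → lucasU P Q n ≠ 0)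
    {ρ : ℕ} (hρpos : 0 < ρ) (hρdvd : (p : ℤ) ∣ lucasU P Q ρ) :
    ∃ E : ℕ, ∀ j : ℕ, 1 ≤ j →
      (lucasU P Q (j * ρ)).natAbs.factorization p
        = (lucasU P Q ρ).natAbs.factorization p + j.factorization p
          + (if p ∣ j then E else 0) := by
  set a := (lucasU P Q ρ).natAbs.factorization p with ha
  set A : ℕ → ℕ := fun t => (lucasU P Q (p ^ t * ρ)).natAbs.factorization p with hA
  have hppos : 0 < p := hp.pos
  have hptρ : ∀ t : ℕ, 1 ≤ p ^ t * ρ := fun t => Nat.mul_pos (Nat.pow_pos hppos) hρpos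
  have hdvdt : ∀ t : ℕ, (p:ℤ) ∣ lucasU P Q (p ^ t * ρ) := by
    intro t
    refine hρdvd.trans ?_
    rw [mul_comm]
    exact lucas_dvd P Q ρ (p ^ t)
  -- the exact increment for t ≥ 1, and for all t when p is odd
  have hstep : ∀ t : ℕ, 1 ≤ t ∨ p ≠ 2 → A (t + 1) = A t + 1 := by
    intro t ht
    by_cases h2 : p = 2
    · rcases ht with ht | ht
      · subst h2
        obtain ⟨t', rfl⟩ : ∃ t', t = t' + 1 := ⟨t - 1, by omega⟩
        have hdvd' : (2:ℤ) ∣ lucasU P Q (2 ^ t' * ρ) := hdvdt t'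
        have := lucas_val_two_step (Q := Q) (P := P) (by exact_mod_cast hpQ) hreg (hptρ t') hdvd'
        have e1 : 2 * (2 * (2 ^ t' * ρ)) = 2 ^ (t' + 1 + 1) * ρ := by ring
        have e2 : 2 * (2 ^ t' * ρ) = 2 ^ (t' + 1) * ρ := by ring
        rw [e1, e2] at this
        simpa [hA] using this
      · exact absurd h2 ht
    · have := (lucas_val_odd hp h2 hpQ hreg (hptρ t) (hdvdt t)).2
      have e : p ^ t * ρ * p = p ^ (t + 1) * ρ := by ring
      rw [e] at this
      simpa [hA] using this
  have hbase : a + 1 ≤ A 1 := by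
    by_cases h2 : p = 2
    · subst h2
      obtain ⟨s, hs⟩ : ∃ s, ρ = s + 1 := ⟨ρ - 1, by omega⟩
      have hdoub := lucas_double P Q s
      have hV2 : (2:ℤ) ∣ (lucasU P Q (s+2) - Q * lucasU P Q s) :=
        lucas_evenV s (by rw [← hs]; exact hρdvd)
      have hVne : lucasU P Q (s+2) - Q * lucasU P Q s ≠ 0 := by
        intro h
        have := hreg (2 * (s+1)) (by omega)
        rw [hdoub, h, mul_zero] at this
        exact this rfl
      have hv : (lucasU P Q (2 * (s+1))).natAbs.factorization 2
          = (lucasU P Q (s+1)).natAbs.factorization 2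
            + ((lucasU P Q (s+2) - Q * lucasU P Q s)).natAbs.factorization 2 := by
        rw [hdoub, int_val_mul (hreg _ (by omega)) hVne]
      have hv1 : 1 ≤ ((lucasU P Q (s+2) - Q * lucasU P Q s)).natAbs.factorization 2 := by
        rw [← pow_one ((2:ℕ))] at hV2 ⊢
        exact (int_pow_dvd_iff Nat.prime_two hVne).mp (by exact_mod_cast hV2)
      have e : 2 ^ 1 * ρ = 2 * (s + 1) := by omega
      have hA1 : A 1 = (lucasU P Q (2 * (s+1))).natAbs.factorization 2 := by
        show (lucasU P Q (2 ^ 1 * ρ)).natAbs.factorization 2 = _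
        rw [e]
      rw [hA1, hv, ← hs]
      omega
    · rw [hstep 0 (Or.inr h2)]
      have : A 0 = a := by simp [hA, ha]
      omega
  set E := A 1 - (a + 1) with hE
  refine ⟨E, ?_⟩
  have hlawA : ∀ t : ℕ, A t = a + t + (if t = 0 then 0 else E) := by
    intro t
    induction t with
    | zero => simp [hA, ha]
    | succ t ih =>
        rcases Nat.eq_zero_or_pos t with rfl | ht
        · have h1 : A 1 = a + 1 + E := by rw [hE]; omega
          simpa using h1
        · rw [hstep t (Or.inl ht), ih]
          simp only [if_neg (by omega : ¬ t = 0), if_neg (by omega : ¬ t + 1 = 0)]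
          omega
  intro j hj
  set t := j.factorization p with hT
  have hj0 : j ≠ 0 := by omega
  have hu : j = p ^ t * (j / p ^ t) := (Nat.ordProj_mul_ordCompl_eq_self j p).symm
  set u := j / p ^ t with hu'
  have hpu : ¬ p ∣ u := Nat.not_dvd_ordCompl hp hj0
  have hu1 : 1 ≤ u := Nat.ordCompl_pos p hj0
  have e : j * ρ = (p ^ t * ρ) * u := by rw [hu]; ring
  have hval : (lucasU P Q (j * ρ)).natAbs.factorization p = A t := by
    by_cases h2 : p = 2
    · subst h2
      obtain ⟨j', hj'⟩ : ∃ j', u = 2 * j' + 1 := ⟨u / 2, by omega⟩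
      have := lucas_val_two_odd (by exact_mod_cast hpQ) hreg (hptρ t) (hdvdt t) hQ j'
      rw [e, hj']
      exact this
    · exact e ▸ (lucas_val_odd hp h2 hpQ hreg (hptρ t) (hdvdt t)).1 u hu1 hpu
  rw [hval, hlawA t]
  have hdvdiff : p ∣ j ↔ ¬ t = 0 := by
    rw [Nat.Prime.dvd_iff_one_le_factorization hp hj0]
    omega
  by_cases hc : p ∣ j
  · rw [if_pos hc, if_neg (hdvdiff.mp hc)]
  · rw [if_neg hc, if_pos (by by_contra hcc; exact hc (hdvdiff.mpr hcc))]

end Law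

section Combinatorics

open Finset

lemma sum_multiples {ρ : ℕ} (hρ : 0 < ρ) (g : ℕ → ℕ)
    (hg : ∀ i : ℕ, 1 ≤ i → ¬ ρ ∣ i → g i = 0) (n : ℕ) :
    ∑ i ∈ range n, g (i + 1) = ∑ k ∈ range (n / ρ), g ((k + 1) * ρ) := by
  induction n with
  | zero => simp
  | succ n ih =>
      rw [sum_range_succ, ih, Nat.succ_div]
      by_cases h : ρ ∣ n + 1
      · rw [if_pos h, sum_range_succ]
        obtain ⟨c, hc⟩ := h
        obtain ⟨c', rfl⟩ : ∃ c', c = c' + 1 := by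
          rcases Nat.eq_zero_or_pos c with rfl | h1
          · omega
          · exact ⟨c - 1, by omega⟩
        have e2 : n = ρ * c' + (ρ - 1) := by
          have e3 : ρ * (c' + 1) = ρ * c' + ρ := by ring
          omega
        have hnd : n / ρ = c' := by
          rw [e2, Nat.mul_add_div hρ, Nat.div_eq_of_lt (by omega), Nat.add_zero]
        have e4 : (n / ρ + 1) * ρ = n + 1 := by
          rw [hnd, hc]; ring
        rw [e4]
      · rw [if_neg h]
        simp [hg (n+1) (by omega) h]

lemma sum_val_factorial (p : ℕ) (N : ℕ) :
    ∑ k ∈ range N, (k + 1).factorization p = (N.factorial).factorization p := by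
  induction N with
  | zero => simp
  | succ N ih =>
      rw [sum_range_succ, ih, Nat.factorial_succ,
        Nat.factorization_mul (by omega) (Nat.factorial_ne_zero N)]
      simp [Nat.add_comm]

lemma sum_count_dvd (p E : ℕ) (N : ℕ) :
    ∑ k ∈ range N, (if p ∣ (k + 1) then E else 0) = E * (N / p) := by
  induction N with
  | zero => simp
  | succ N ih =>
      rw [sum_range_succ, ih, Nat.succ_div]
      by_cases h : p ∣ N + 1
      · rw [if_pos h, if_pos h]
        ring
      · rw [if_neg h, if_neg h]
        ring

lemma fact_super (p : ℕ) (a b : ℕ) :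
    (a.factorial).factorization p + (b.factorial).factorization p
      ≤ ((a + b).factorial).factorization p := by
  have h := Nat.add_choose_mul_factorial_mul_factorial a b
  have hne : (a + b).choose b ≠ 0 := (Nat.choose_pos (Nat.le_add_left b a)).ne'
  calc a.factorial.factorization p + b.factorial.factorization p
      ≤ ((a+b).choose b).factorization p
          + (a.factorial.factorization p + b.factorial.factorization p) := by omega
    _ = (((a+b).choose b) * (a.factorial * b.factorial)).factorization p := by
        rw [Nat.factorization_mul hne (Nat.mul_ne_zero (Nat.factorial_ne_zero a) (Nat.factorial_ne_zero b)),
          Nat.factorization_mul (Nat.factorial_ne_zero a) (Nat.factorial_ne_zero b)]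
        simp
    _ = ((a + b).factorial).factorization p := by
        rw [← h]; ring_nf
  
lemma fact_mono (p : ℕ) {a b : ℕ} (h : a ≤ b) :
    (a.factorial).factorization p ≤ (b.factorial).factorization p := by
  have hd := Nat.factorial_dvd_factorial h
  exact Finsupp.le_def.mp ((Nat.factorization_le_iff_dvd (Nat.factorial_ne_zero a)
    (Nat.factorial_ne_zero b)).mpr hd) p

lemma fact_super_iter (p : ℕ) (l k r : ℕ) :
    l * ((k.factorial).factorization p) + (r.factorial).factorization p
      ≤ (((l * k + r).factorial)).factorization p := by
  induction l with
  | zero => simp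
  | succ l ih =>
      have h1 : (l + 1) * (k.factorial.factorization p) + r.factorial.factorization p
          = k.factorial.factorization p + (l * (k.factorial.factorization p)
            + r.factorial.factorization p) := by ring
      rw [h1]
      calc k.factorial.factorization p + (l * (k.factorial.factorization p)
            + r.factorial.factorization p)
          ≤ k.factorial.factorization p + ((l * k + r).factorial).factorization p := by
            omega
        _ ≤ ((k + (l * k + r)).factorial).factorization p := fact_super p k (l * k + r)
        _ = (((l + 1) * k + r).factorial).factorization p := by ring_nf

lemma div_pred_mul {ρ : ℕ} (hρ : 0 < ρ) (c w : ℕ) (hc : 1 ≤ c) (hw : 1 ≤ w) (hwρ : w ≤ ρ) :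
    (ρ * c - w) / ρ = c - 1 := by
  obtain ⟨c', rfl⟩ : ∃ c', c = c' + 1 := ⟨c - 1, by omega⟩
  have e : ρ * (c' + 1) - w = ρ * c' + (ρ - w) := by
    have : ρ * (c' + 1) = ρ * c' + ρ := by ring
    omega
  rw [e, Nat.mul_add_div hρ, Nat.div_eq_of_lt (by omega)]
  omega

end Combinatorics

/-- If `p ∤ Q` is a prime whose rank of appearance `ρ` in the Δ-regular Lucas sequence `U`
satisfies `ρ > l`, then `v_p(C_{U,l}(n)) ≥ 0` for all `n ≥ 1`, i.e. the `p`-adic valuation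
of the denominator `U_{n+1}^l · (n!_U)^{l+1}` is at most that of the numerator
`((l+1)n)!_U`. -/
theorem stmt15 (P Q : ℤ) (l : ℕ) (hl : 1 ≤ l) (hP : P ≠ 0) (hQ : Q ≠ 0)
    (hcop : IsCoprime P Q) (hreg : ∀ n : ℕ, 1 ≤ n → lucasU P Q n ≠ 0)
    (hΔ : P ^ 2 - 4 * Q ≠ 0) (p : ℕ) (hp : p.Prime) (hpQ : ¬ (p : ℤ) ∣ Q)
    (ρ : ℕ) (hρpos : 0 < ρ) (hρdvd : (p : ℤ) ∣ lucasU P Q ρ)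
    (hρmin : ∀ m : ℕ, 0 < m → (p : ℤ) ∣ lucasU P Q m → ρ ≤ m) (hρl : l < ρ) :
    ∀ n : ℕ, 1 ≤ n →
      padicValInt p (lucasU P Q (n + 1) ^ l * (lucasFact P Q n) ^ (l + 1))
        ≤ padicValInt p (lucasFact P Q ((l + 1) * n)) := by
  intro n hn
  have hconv : ∀ x : ℤ, padicValInt p x = x.natAbs.factorization p := fun x =>
    (Nat.factorization_def _ hp).symm
  have hFne : ∀ m : ℕ, lucasFact P Q m ≠ 0 := by
    intro m
    unfold lucasFact
    rw [Finset.prod_ne_zero_iff]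
    intro i _
    exact hreg _ (by omega)
  have hFval : ∀ m : ℕ, (lucasFact P Q m).natAbs.factorization p
      = ∑ i ∈ Finset.range m, (lucasU P Q (i + 1)).natAbs.factorization p := by
    intro m
    induction m with
    | zero => simp [lucasFact]
    | succ m ih =>
        have e : lucasFact P Q (m + 1) = lucasFact P Q m * lucasU P Q (m + 1) :=
          Finset.prod_range_succ _ m
        rw [e, int_val_mul (hFne m) (hreg _ (by omega)), ih, Finset.sum_range_succ]
  obtain ⟨E, hlaw⟩ := lucas_val_law hp hpQ hQ hreg hρpos hρdvd
  set a := (lucasU P Q ρ).natAbs.factorization p with ha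
  have hzero : ∀ i : ℕ, 1 ≤ i → ¬ ρ ∣ i → (lucasU P Q i).natAbs.factorization p = 0 := by
    intro i hi hndvd
    apply int_val_zero
    intro hdvd
    exact hndvd ((lucas_rank hcop hp hρpos hρdvd hρmin i hi).mp hdvd)
  have hF : ∀ m : ℕ, (lucasFact P Q m).natAbs.factorization p
      = a * (m / ρ) + ((m / ρ).factorial).factorization p + E * (m / ρ / p) := by
    intro m
    rw [hFval m, sum_multiples hρpos _ hzero m]
    rw [Finset.sum_congr rfl (fun k _ => hlaw (k + 1) (by omega))]
    rw [Finset.sum_add_distrib, Finset.sum_add_distrib, sum_val_factorial,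
      sum_count_dvd, Finset.sum_const, Finset.card_range, smul_eq_mul]
    ring
  have hvpow : ∀ (x : ℤ) (e : ℕ), ((x ^ e).natAbs).factorization p
      = e * (x.natAbs.factorization p) := by
    intro x e
    rw [Int.natAbs_pow, Nat.factorization_pow]
    simp
  have hUn1 : lucasU P Q (n + 1) ≠ 0 := hreg _ (by omega)
  rw [hconv, hconv, int_val_mul (pow_ne_zero _ hUn1) (pow_ne_zero _ (hFne n)),
    hvpow, hvpow, hF n, hF ((l + 1) * n)]
  by_cases hcase : ρ ∣ (n + 1)
  · -- n + 1 = (k' + 1) * ρ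
    obtain ⟨c, hc⟩ := hcase
    obtain ⟨k', rfl⟩ : ∃ k', c = k' + 1 := by
      rcases Nat.eq_zero_or_pos c with rfl | h1
      · omega
      · exact ⟨c - 1, by omega⟩
    have hk : n + 1 = (k' + 1) * ρ := by rw [hc]; ring
    have hNval : n / ρ = k' := by
      have e0 : (k' + 1) * ρ = ρ * (k' + 1) := by ring
      have e1 : n = ρ * (k' + 1) - 1 := by omega
      rw [e1, div_pred_mul hρpos (k' + 1) 1 (by omega) (by omega) (by omega)]
      omega
    have hMval : ((l + 1) * n) / ρ = (l + 1) * k' + l := by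
      have e5 : (l + 1) * n + (l + 1) = ρ * ((l + 1) * (k' + 1)) :=
        calc (l + 1) * n + (l + 1) = (l + 1) * (n + 1) := by ring
          _ = (l + 1) * ((k' + 1) * ρ) := by rw [hk]
          _ = ρ * ((l + 1) * (k' + 1)) := by ring
      have e6 : (l + 1) * n = ρ * ((l + 1) * (k' + 1)) - (l + 1) := by omega
      rw [e6, div_pred_mul hρpos ((l + 1) * (k' + 1)) (l + 1)
        (Nat.mul_pos (by omega) (by omega)) (by omega) (by omega)]
      have e7 : (l + 1) * (k' + 1) = (l + 1) * k' + (l + 1) := by ring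
      omega
    have hvUn1 : (lucasU P Q (n + 1)).natAbs.factorization p
        = a + (k' + 1).factorization p + (if p ∣ (k' + 1) then E else 0) := by
      rw [hk]
      exact hlaw (k' + 1) (by omega)
    rw [hvUn1, hNval, hMval]
    set fk := (k' + 1).factorization p with hfk'
    set f1 := (k'.factorial).factorization p with hf1
    set f2 := (((l + 1) * k' + l).factorial).factorization p with hf2
    set et := (if p ∣ (k' + 1) then E else 0) with het
    have hfksum : fk + f1 = ((k' + 1).factorial).factorization p := by
      rw [Nat.factorial_succ, Nat.factorization_mul (by omega) (Nat.factorial_ne_zero _)]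
      simp [hfk', hf1]
    have hfpart : l * fk + (l + 1) * f1 ≤ f2 := by
      have h := fact_super_iter p l (k' + 1) k'
      have e : l * (k' + 1) + k' = (l + 1) * k' + l := by ring
      rw [e] at h
      calc l * fk + (l + 1) * f1 = l * (fk + f1) + f1 := by ring
        _ = l * (((k' + 1).factorial).factorization p) + f1 := by rw [hfksum]
        _ ≤ f2 := h
    have hEpart : l * et + (l + 1) * (E * (k' / p)) ≤ E * (((l + 1) * k' + l) / p) := by
      by_cases hpk : p ∣ (k' + 1)
      · rw [het, if_pos hpk]
        obtain ⟨c, hcc⟩ := hpk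
        obtain ⟨c', rfl⟩ : ∃ c', c = c' + 1 := by
          rcases Nat.eq_zero_or_pos c with rfl | h1
          · omega
          · exact ⟨c - 1, by omega⟩
        have e8 : p * (c' + 1) = p * c' + p := by ring
        have hk'p : k' / p = c' := by
          have e9 : k' = p * c' + (p - 1) := by
            have := hp.pos
            omega
          rw [e9, Nat.mul_add_div hp.pos, Nat.div_eq_of_lt (by have := hp.pos; omega),
            Nat.add_zero]
        have e10 : p * ((l + 1) * (c' + 1)) = (l + 1) * k' + l + 1 :=
          calc p * ((l + 1) * (c' + 1)) = (l + 1) * (p * (c' + 1)) := by ring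
            _ = (l + 1) * (k' + 1) := by rw [← hcc]
            _ = (l + 1) * k' + l + 1 := by ring
        have e11 : (l + 1) * k' + l = p * ((l + 1) * (c' + 1)) - 1 := by omega
        rw [hk'p, e11, div_pred_mul hp.pos ((l + 1) * (c' + 1)) 1
          (Nat.mul_pos (by omega) (by omega)) (by omega) (by have := hp.pos; omega)]
        have e12 : (l + 1) * (c' + 1) = (l + 1) * c' + (l + 1) := by ring
        have e13 : (l + 1) * (c' + 1) - 1 = (l + 1) * c' + l := by omega
        rw [e13]
        have e14 : l * E + (l + 1) * (E * c') = E * ((l + 1) * c' + l) := by ring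
        omega
      · rw [het, if_neg hpk]
        simp only [Nat.mul_zero, Nat.zero_add]
        calc (l + 1) * (E * (k' / p)) = E * ((l + 1) * (k' / p)) := by ring
          _ ≤ E * (((l + 1) * k') / p) :=
              Nat.mul_le_mul le_rfl (Nat.mul_div_le_mul_div_assoc _ _ _)
          _ ≤ E * (((l + 1) * k' + l) / p) :=
              Nat.mul_le_mul le_rfl (Nat.div_le_div_right (by omega))
    have haeq : l * a + (l + 1) * (a * k') = a * ((l + 1) * k' + l) := by ring
    calc l * (a + fk + et) + (l + 1) * (a * k' + f1 + E * (k' / p))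
        = (l * a + (l + 1) * (a * k'))
          + ((l * fk + (l + 1) * f1) + (l * et + (l + 1) * (E * (k' / p)))) := by ring
      _ ≤ a * ((l + 1) * k' + l) + (f2 + E * (((l + 1) * k' + l) / p)) :=
          add_le_add (le_of_eq haeq) (add_le_add hfpart hEpart)
      _ = a * ((l + 1) * k' + l) + f2 + E * (((l + 1) * k' + l) / p) := by ring
  · rw [hzero (n + 1) (by omega) hcase]
    simp only [Nat.mul_zero, Nat.zero_add]
    have h1 : (l + 1) * (n / ρ) ≤ ((l + 1) * n) / ρ := Nat.mul_div_le_mul_div_assoc _ _ _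
    have h2 : (l + 1) * (a * (n / ρ)) ≤ a * (((l + 1) * n) / ρ) :=
      calc (l + 1) * (a * (n / ρ)) = a * ((l + 1) * (n / ρ)) := by ring
        _ ≤ a * (((l + 1) * n) / ρ) := Nat.mul_le_mul le_rfl h1
    have h3 : (l + 1) * (((n / ρ).factorial).factorization p)
        ≤ ((((l + 1) * n / ρ)).factorial).factorization p := by
      have h := fact_super_iter p (l + 1) (n / ρ) 0
      simp only [Nat.add_zero, Nat.factorial_zero, Nat.factorization_one, Finsupp.coe_zero,
        Pi.zero_apply, Nat.add_zero] at h
      exact le_trans (by omega) (le_trans h (fact_mono p h1))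
    have h4 : (l + 1) * (E * (n / ρ / p)) ≤ E * ((l + 1) * n / ρ / p) :=
      calc (l + 1) * (E * (n / ρ / p)) = E * ((l + 1) * (n / ρ / p)) := by ring
        _ ≤ E * ((l + 1) * (n / ρ) / p) :=
            Nat.mul_le_mul le_rfl (Nat.mul_div_le_mul_div_assoc _ _ _)
        _ ≤ E * ((l + 1) * n / ρ / p) :=
            Nat.mul_le_mul le_rfl (Nat.div_le_div_right h1)
    calc (l + 1) * (a * (n / ρ) + ((n / ρ).factorial).factorization p + E * (n / ρ / p))
        = (l + 1) * (a * (n / ρ)) + ((l + 1) * (((n / ρ).factorial).factorization p)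
          + (l + 1) * (E * (n / ρ / p))) := by ring
      _ ≤ a * (((l + 1) * n) / ρ) + (((((l + 1) * n / ρ)).factorial).factorization p
          + E * ((l + 1) * n / ρ / p)) := add_le_add h2 (add_le_add h3 h4)
      _ = a * (((l + 1) * n) / ρ) + ((((l + 1) * n / ρ)).factorial).factorization p
          + E * ((l + 1) * n / ρ / p) := by ring
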